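/- Comparison of capital levels of consecutive models: assume 0 = A_0 < A_1 < ⋯ < A_k, set A_{k+1} = ∞, let u_0,…,u_k > 0 and r > 0, and define l^i_t as in the comparison-model setup. Then for every 0 ≤ i ≤ k−1: (a) l^i_t = l^{i+1}_t for all 0 < t ≤ A_i; (b) l^i_t > l^{i+1}_t for all t ∈ (A_i, A_{i+1}]; (c) l^i_t < l^{i+1}_t for all t > A_{i+1}. -/

import Mathlib

noncomputable section

/-- Capital level `l^i_t` of the comparison model `M^i`:
`l^i_t = Σ_{j=0}^m u_j` if `t ∈ (A_m, A_{m+1}]` for some `m < i` (equivalently `t ≤ A_i`,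
where `m` is the largest index with `A_m < t`), and
`l^i_t = Σ_{j=0}^i u_j + Σ_{j=i+1}^k u_j·e^{−r(A_j−A_i)}` for `t > A_i`
(with the convention `A_{k+1} = ∞`). -/
def lvl (A u : ℕ → ℝ) (r : ℝ) (k i : ℕ) (t : ℝ) : ℝ :=
  if A i < t then
    (∑ j ∈ Finset.range (i + 1), u j)
      + ∑ j ∈ Finset.Icc (i + 1) k, u j * Real.exp (-(r * (A j - A i)))
  else
    ∑ j ∈ Finset.range (((Finset.range (k + 1)).filter (fun m => A m < t)).card), u j

/-- comparison of capital levels of consecutive models. Assuming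
`0 = A_0 < A_1 < ⋯ < A_k`, `u_0,…,u_k > 0` and `r > 0`, for every `0 ≤ i ≤ k−1`:
(a) `l^i_t = l^{i+1}_t` for `0 < t ≤ A_i`, (b) `l^i_t > l^{i+1}_t` for `t ∈ (A_i, A_{i+1}]`,
(c) `l^i_t < l^{i+1}_t` for `t > A_{i+1}`. -/
theorem level_comparison_consecutive_models
    (A u : ℕ → ℝ) (r : ℝ) (k : ℕ) (hk : 1 ≤ k)
    (hA0 : A 0 = 0) (hAmono : ∀ i, i < k → A i < A (i + 1))
    (hu : ∀ j, 0 < u j) (hr : 0 < r)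
    (i : ℕ) (hik : i + 1 ≤ k) :
    (∀ t : ℝ, 0 < t → t ≤ A i → lvl A u r k i t = lvl A u r k (i + 1) t)
    ∧ (∀ t : ℝ, A i < t → t ≤ A (i + 1) → lvl A u r k i t > lvl A u r k (i + 1) t)
    ∧ (∀ t : ℝ, A (i + 1) < t → lvl A u r k i t < lvl A u r k (i + 1) t) := by
  have hstrict : ∀ m n : ℕ, m < n → n ≤ k → A m < A n := by
    intro m n hmn hnk
    induction n with
    | zero => omega
    | succ p ih =>
      rcases Nat.lt_succ_iff_lt_or_eq.mp hmn with h | h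
      · exact lt_trans (ih h (by omega)) (hAmono p (by omega))
      · subst h; exact hAmono m (by omega)
  have hmono : ∀ m n : ℕ, m ≤ n → n ≤ k → A m ≤ A n := by
    intro m n hmn hnk
    rcases eq_or_lt_of_le hmn with h | h
    · subst h; exact le_rfl
    · exact (hstrict m n h hnk).le
  have hAi : A i < A (i + 1) := hstrict i (i + 1) (Nat.lt_succ_self i) hik
  refine ⟨?_, ?_, ?_⟩
  · intro t _ hti
    have h1 : ¬ A i < t := not_lt.mpr hti
    have h2 : ¬ A (i + 1) < t := not_lt.mpr (hti.trans hAi.le)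
    simp only [lvl, if_neg h1, if_neg h2]
  · intro t hti hti1
    have h2 : ¬ A (i + 1) < t := not_lt.mpr hti1
    rw [lvl, lvl, if_pos hti, if_neg h2]
    have hfilter : (Finset.range (k + 1)).filter (fun m => A m < t) = Finset.range (i + 1) := by
      ext m
      simp only [Finset.mem_filter, Finset.mem_range]
      constructor
      · rintro ⟨hm, hmt⟩
        by_contra h
        push_neg at h
        have : A (i + 1) ≤ A m := hmono (i + 1) m h (by omega)
        linarith
      · intro hm
        exact ⟨by omega, lt_of_le_of_lt (hmono m i (by omega) (by omega)) hti⟩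
    rw [hfilter, Finset.card_range]
    have hpos : 0 < ∑ j ∈ Finset.Icc (i + 1) k, u j * Real.exp (-(r * (A j - A i))) := by
      apply Finset.sum_pos
      · intro j _
        exact mul_pos (hu j) (Real.exp_pos _)
      · exact ⟨i + 1, Finset.mem_Icc.mpr ⟨le_rfl, hik⟩⟩
    linarith
  · intro t ht
    have h1 : A i < t := hAi.trans ht
    rw [lvl, lvl, if_pos h1, if_pos ht]
    have hsplit : Finset.Icc (i + 1) k = insert (i + 1) (Finset.Icc (i + 2) k) := by
      ext m
      simp only [Finset.mem_Icc, Finset.mem_insert]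
      omega
    have hnotmem : (i + 1) ∉ Finset.Icc (i + 2) k := by
      simp only [Finset.mem_Icc]; omega
    rw [hsplit, Finset.sum_insert hnotmem, Finset.sum_range_succ u (i + 1)]
    have hexp : u (i + 1) * Real.exp (-(r * (A (i + 1) - A i))) < u (i + 1) := by
      have : Real.exp (-(r * (A (i + 1) - A i))) < 1 := by
        rw [Real.exp_lt_one_iff]
        nlinarith
      nlinarith [hu (i + 1), Real.exp_pos (-(r * (A (i + 1) - A i)))]
    have hsum : ∑ j ∈ Finset.Icc (i + 2) k, u j * Real.exp (-(r * (A j - A i)))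
        ≤ ∑ j ∈ Finset.Icc (i + 2) k, u j * Real.exp (-(r * (A j - A (i + 1)))) := by
      apply Finset.sum_le_sum
      intro j _
      have hle : Real.exp (-(r * (A j - A i))) ≤ Real.exp (-(r * (A j - A (i + 1)))) := by
        apply Real.exp_le_exp.mpr
        nlinarith
      exact mul_le_mul_of_nonneg_left hle (hu j).le
    linarith
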